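/- Every Lie algebra with an ad-invariant nondegenerate symmetric bilinear form is Ricci-parallel, i.e., ∇ric = 0. -/

import Mathlib

/-- The Ricci tensor of a left-invariant metric determined by a connection `nabla`:
`ric(x,y) = tr (ξ ↦ ∇_ξ ∇_x y − ∇_x ∇_ξ y − ∇_{[ξ,x]} y)`. -/
noncomputable def ricci {g : Type*} [LieRing g] [LieAlgebra ℝ g]
    (nabla : g →ₗ[ℝ] g →ₗ[ℝ] g) (x y : g) : ℝ :=
  LinearMap.trace ℝ g
    (nabla.flip (nabla x y) - nabla x ∘ₗ nabla.flip y +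
      nabla.flip y ∘ₗ (LieAlgebra.ad ℝ g x : g →ₗ[ℝ] g))

/-- `nabla` is the Levi-Civita connection of the metric Lie algebra `(g, B)`
(Koszul formula). -/
def IsLeviCivita {g : Type*} [LieRing g] [LieAlgebra ℝ g]
    (B : g →ₗ[ℝ] g →ₗ[ℝ] ℝ) (nabla : g →ₗ[ℝ] g →ₗ[ℝ] g) : Prop :=
  ∀ x y z : g, 2 * B (nabla x y) z = B ⁅x, y⁆ z - B ⁅y, z⁆ x + B ⁅z, x⁆ y

/-- Ricci-parallel: `(∇_x ric)(y,z) = −ric(∇_x y, z) − ric(y, ∇_x z) = 0`. -/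
noncomputable def IsRicciParallel {g : Type*} [LieRing g] [LieAlgebra ℝ g]
    (nabla : g →ₗ[ℝ] g →ₗ[ℝ] g) : Prop :=
  ∀ x y z : g, ricci nabla (nabla x y) z + ricci nabla y (nabla x z) = 0

attribute [local instance 100] LieRing.ofAssociativeRing

/-- Every Lie algebra with an ad-invariant nondegenerate symmetric bilinear form is
Ricci-parallel. -/
theorem stmt_2 (g : Type*) [LieRing g] [LieAlgebra ℝ g] [FiniteDimensional ℝ g]
    (B : g →ₗ[ℝ] g →ₗ[ℝ] ℝ)
    (hsymm : ∀ x y : g, B x y = B y x)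
    (hnd : ∀ x : g, (∀ y : g, B x y = 0) → x = 0)
    (hinv : ∀ x y z : g, B ⁅x, y⁆ z + B y ⁅x, z⁆ = 0)
    (nabla : g →ₗ[ℝ] g →ₗ[ℝ] g)
    (hLC : IsLeviCivita B nabla) :
    IsRicciParallel nabla := by
  -- Step 1: the Levi-Civita connection is half the bracket
  have hhalf : ∀ x y : g, nabla x y = (2⁻¹ : ℝ) • ⁅x, y⁆ := by
    intro x y
    have key : ∀ z : g, B (nabla x y - (2⁻¹ : ℝ) • ⁅x, y⁆) z = 0 := by
      intro z
      have h1 := hLC x y z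
      have e1 : B ⁅y, z⁆ x = B ⁅x, y⁆ z := by
        have h0 := hinv y z x
        have h2 : B ⁅y, z⁆ x = - B z ⁅y, x⁆ := by linarith
        rw [h2, show (⁅y, x⁆ : g) = -⁅x, y⁆ by rw [← lie_skew], map_neg, neg_neg,
          hsymm]
      have e2 : B ⁅z, x⁆ y = B ⁅x, y⁆ z := by
        have h0 := hinv z x y
        have h2 : B ⁅z, x⁆ y = - B x ⁅z, y⁆ := by linarith
        rw [h2, show (⁅z, y⁆ : g) = -⁅y, z⁆ by rw [← lie_skew], map_neg, neg_neg,
          hsymm]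
        have h3 := hinv y z x
        have h4 : B ⁅y, z⁆ x = - B z ⁅y, x⁆ := by linarith
        rw [h4, show (⁅y, x⁆ : g) = -⁅x, y⁆ by rw [← lie_skew], map_neg, neg_neg,
          hsymm]
      have h5 : 2 * B (nabla x y) z = B ⁅x, y⁆ z := by
        rw [h1, e1, e2]; ring
      have hsm : B ((2⁻¹ : ℝ) • ⁅x, y⁆) z = 2⁻¹ * B ⁅x, y⁆ z := by
        rw [map_smul]; rfl
      rw [map_sub, LinearMap.sub_apply, hsm]
      linarith
    exact sub_eq_zero.mp (hnd _ key)
  -- Step 2: ricci is a multiple of the Killing form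
  have hop : ∀ x y : g,
      (nabla.flip (nabla x y) - nabla x ∘ₗ nabla.flip y +
        nabla.flip y ∘ₗ (LieAlgebra.ad ℝ g x : g →ₗ[ℝ] g)) =
      (4⁻¹ : ℝ) • (LieAlgebra.ad ℝ g x * LieAlgebra.ad ℝ g y)
        - (2⁻¹ : ℝ) • (LieAlgebra.ad ℝ g y * LieAlgebra.ad ℝ g x)
        - (4⁻¹ : ℝ) • (LieAlgebra.ad ℝ g ⁅x, y⁆) := by
    intro x y
    ext ξ
    simp only [LinearMap.add_apply, LinearMap.sub_apply, LinearMap.smul_apply,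
      LinearMap.comp_apply, LinearMap.flip_apply, Module.End.mul_apply,
      LieAlgebra.ad_apply, hhalf, lie_smul, smul_smul]
    rw [show ⁅ξ, ⁅x, y⁆⁆ = -⁅⁅x, y⁆, ξ⁆ by rw [← lie_skew],
        show ⁅x, ⁅ξ, y⁆⁆ = -⁅x, ⁅y, ξ⁆⁆ by rw [← lie_skew ξ y, lie_neg],
        show ⁅⁅x, ξ⁆, y⁆ = -⁅y, ⁅x, ξ⁆⁆ by rw [← lie_skew]]
    module
  have tr := LinearMap.trace ℝ g
  have hric : ∀ x y : g, ricci nabla x y =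
      -(4⁻¹ : ℝ) * LinearMap.trace ℝ g (LieAlgebra.ad ℝ g x * LieAlgebra.ad ℝ g y) := by
    intro x y
    rw [ricci, hop]
    rw [map_sub, map_sub, map_smul, map_smul, map_smul]
    have hz : LinearMap.trace ℝ g (LieAlgebra.ad ℝ g ⁅x, y⁆) = 0 := by
      rw [LieHom.map_lie, Ring.lie_def, map_sub, LinearMap.trace_mul_comm, sub_self]
    have hc : LinearMap.trace ℝ g (LieAlgebra.ad ℝ g y * LieAlgebra.ad ℝ g x) =
        LinearMap.trace ℝ g (LieAlgebra.ad ℝ g x * LieAlgebra.ad ℝ g y) :=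
      LinearMap.trace_mul_comm ℝ _ _
    rw [hz, hc]
    simp only [smul_eq_mul]
    ring
  -- Step 3: invariance of the Killing form finishes the proof
  intro x y z
  rw [hric, hric, hhalf, hhalf]
  -- goal now involves ad of scaled brackets
  have adsm : ∀ (w : g), LieAlgebra.ad ℝ g ((2⁻¹ : ℝ) • w) = (2⁻¹ : ℝ) • LieAlgebra.ad ℝ g w :=
    fun w => map_smul (LieAlgebra.ad ℝ g).toLinearMap _ _
  rw [adsm, adsm, smul_mul_assoc, mul_smul_comm, map_smul, map_smul]
  have cyc : ∀ a b c : Module.End ℝ g, LinearMap.trace ℝ g (a * b * c)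
      = LinearMap.trace ℝ g (b * (c * a)) := by
    intro a b c
    rw [mul_assoc, LinearMap.trace_mul_comm ℝ a (b * c), mul_assoc]
  have key : LinearMap.trace ℝ g (LieAlgebra.ad ℝ g ⁅x, y⁆ * LieAlgebra.ad ℝ g z) +
      LinearMap.trace ℝ g (LieAlgebra.ad ℝ g y * LieAlgebra.ad ℝ g ⁅x, z⁆) = 0 := by
    rw [LieHom.map_lie, LieHom.map_lie, Ring.lie_def, Ring.lie_def,
      sub_mul, mul_sub, map_sub, map_sub]
    have h1 := cyc (LieAlgebra.ad ℝ g x) (LieAlgebra.ad ℝ g y) (LieAlgebra.ad ℝ g z)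
    have h2 : LinearMap.trace ℝ g (LieAlgebra.ad ℝ g y * (LieAlgebra.ad ℝ g x * LieAlgebra.ad ℝ g z))
        = LinearMap.trace ℝ g (LieAlgebra.ad ℝ g y * LieAlgebra.ad ℝ g x * LieAlgebra.ad ℝ g z) := by
      rw [mul_assoc]
    linarith
  simp only [smul_eq_mul]
  linarith
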